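/- Consider the planar system ẋ₁ = −x₁ + x₂², ẋ₂ = −x₂ on the forward invariant set X = [0,∞)², which has unique equilibrium x* = (0,0). The function V(x) = max{ x₁/2, x₂ + x₂²/2 } is a global Lyapunov function for the origin: V is positive definite on X, its sublevel sets in X are compact, and along every solution x(·) with values in X, t ↦ V(x(t)) is nonincreasing and V(x(t)) → 0 as t → ∞. -/

import Mathlib

open Filter Topology

noncomputable section

/-- A solution of `ẋ = f(x)` with values in `X`, defined for all `t ≥ 0`. -/
def IsSolution {n : ℕ} (f : (Fin n → ℝ) → (Fin n → ℝ)) (X : Set (Fin n → ℝ))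
    (x : ℝ → (Fin n → ℝ)) : Prop :=
  (∀ t : ℝ, 0 ≤ t → x t ∈ X) ∧ ∀ t : ℝ, 0 ≤ t → HasDerivAt x (f (x t)) t

/-- A global Lyapunov function for the equilibrium `xs` of `ẋ = f(x)` on `X`. -/
def IsGlobalLyapunov {n : ℕ} (f : (Fin n → ℝ) → (Fin n → ℝ)) (X : Set (Fin n → ℝ))
    (xs : Fin n → ℝ) (V : (Fin n → ℝ) → ℝ) : Prop :=
  ContinuousOn V X ∧
  (∀ x ∈ X, 0 ≤ V x) ∧
  (∀ x ∈ X, (V x = 0 ↔ x = xs)) ∧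
  (∀ L : ℝ, IsCompact {x ∈ X | V x ≤ L}) ∧
  ∀ x : ℝ → (Fin n → ℝ), IsSolution f X x →
    AntitoneOn (fun t => V (x t)) (Set.Ici 0) ∧
    Tendsto (fun t => V (x t)) atTop (nhds 0)

/-- Global asymptotic stability of the equilibrium `xs` of `ẋ = f(x)` on `X`. -/
def IsGAS {n : ℕ} (f : (Fin n → ℝ) → (Fin n → ℝ)) (X : Set (Fin n → ℝ))
    (xs : Fin n → ℝ) : Prop :=
  (∀ ε > (0 : ℝ), ∃ δ > (0 : ℝ), ∀ x : ℝ → (Fin n → ℝ), IsSolution f X x →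
      ‖x 0 - xs‖ < δ → ∀ t ≥ (0 : ℝ), ‖x t - xs‖ < ε) ∧
  ∀ x : ℝ → (Fin n → ℝ), IsSolution f X x → Tendsto x atTop (nhds xs)


/-- The planar system `ẋ₁ = −x₁ + x₂², ẋ₂ = −x₂`. -/
def fEx : (Fin 2 → ℝ) → (Fin 2 → ℝ) := fun x => ![-(x 0) + (x 1) ^ 2, -(x 1)]

/-- The nonnegative quadrant. -/
def XEx : Set (Fin 2 → ℝ) := {x | 0 ≤ x 0 ∧ 0 ≤ x 1}

/-- Auxiliary: a function with zero derivative on `[0, ∞)` is constant there. -/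
lemma constAux {g : ℝ → ℝ} (hg : ∀ τ : ℝ, 0 ≤ τ → HasDerivAt g 0 τ) {t : ℝ} (ht : 0 ≤ t) :
    g t = g 0 :=
  constant_of_has_deriv_right_zero
    (fun τ hτ => ((hg τ hτ.1).continuousAt).continuousWithinAt)
    (fun τ hτ => (hg τ hτ.1).hasDerivWithinAt)
    t ⟨ht, le_rfl⟩

lemma expNegDeriv (τ : ℝ) : HasDerivAt (fun s : ℝ => Real.exp (-s)) (-Real.exp (-τ)) τ := by
  have := (Real.hasDerivAt_exp (-τ)).comp τ (hasDerivAt_neg τ)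
  simpa [Function.comp_def] using this

/-- Explicit solution formula for the planar system. -/
lemma sol_eq {x : ℝ → Fin 2 → ℝ} (hx : ∀ t : ℝ, 0 ≤ t → HasDerivAt x (fEx (x t)) t) :
    ∀ t : ℝ, 0 ≤ t → x t 1 = x 0 1 * Real.exp (-t) ∧
      x t 0 = (x 0 0 + (x 0 1) ^ 2) * Real.exp (-t) - (x 0 1) ^ 2 * Real.exp (-t) ^ 2 := by
  have h0 : ∀ t : ℝ, 0 ≤ t → HasDerivAt (fun τ => x τ 0) (-(x t 0) + (x t 1) ^ 2) t := by
    intro t ht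
    have := (hasDerivAt_pi.1 (hx t ht)) 0
    simpa [fEx] using this
  have h1 : ∀ t : ℝ, 0 ≤ t → HasDerivAt (fun τ => x τ 1) (-(x t 1)) t := by
    intro t ht
    have := (hasDerivAt_pi.1 (hx t ht)) 1
    simpa [fEx] using this
  have hb : ∀ t : ℝ, 0 ≤ t → x t 1 = x 0 1 * Real.exp (-t) := by
    intro t ht
    have key : ∀ τ : ℝ, 0 ≤ τ → HasDerivAt (fun s => Real.exp s * x s 1) 0 τ := by
      intro τ hτ
      have := (Real.hasDerivAt_exp τ).mul (h1 τ hτ)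
      refine this.congr_deriv ?_
      ring
    have h := constAux key ht
    simp only [Real.exp_zero, one_mul] at h
    have hmul : Real.exp t * Real.exp (-t) = 1 := by rw [← Real.exp_add]; simp
    linear_combination Real.exp (-t) * h - x t 1 * hmul
  intro t ht
  refine ⟨hb t ht, ?_⟩
  have key : ∀ τ : ℝ, 0 ≤ τ →
      HasDerivAt (fun s => Real.exp s * x s 0 + (x 0 1) ^ 2 * Real.exp (-s)) 0 τ := by
    intro τ hτ
    have d1 := (Real.hasDerivAt_exp τ).mul (h0 τ hτ)
    have d2 := (expNegDeriv τ).const_mul ((x 0 1) ^ 2)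
    have := d1.add d2
    refine this.congr_deriv ?_
    symm
    rw [hb τ hτ, Real.exp_neg]
    have hE := Real.exp_ne_zero τ
    field_simp
    ring
  have h := constAux key ht
  simp only [Real.exp_zero, one_mul, neg_zero, mul_one] at h
  have hmul : Real.exp t * Real.exp (-t) = 1 := by rw [← Real.exp_add]; simp
  linear_combination Real.exp (-t) * h - x t 0 * hmul

/-- The Lyapunov function evaluated along the explicit solution, as a function of
`u = exp (-t)`. -/
def FF (a b : ℝ) (u : ℝ) : ℝ :=
  max (((a + b ^ 2) * u - b ^ 2 * u ^ 2) / 2) (b * u + (b * u) ^ 2 / 2)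

lemma FF_mono {a b : ℝ} (_ha : 0 ≤ a) (hb : 0 ≤ b) {u v : ℝ} (hu : 0 ≤ u) (huv : u ≤ v) :
    FF a b u ≤ FF a b v := by
  have hv : 0 ≤ v := le_trans hu huv
  have h2 : b * u + (b * u) ^ 2 / 2 ≤ b * v + (b * v) ^ 2 / 2 := by
    nlinarith [mul_nonneg hb (sub_nonneg.2 huv),
      mul_nonneg (mul_nonneg (mul_nonneg hb hb) (sub_nonneg.2 huv)) (by linarith : (0:ℝ) ≤ u + v)]
  rcases le_total (a + b ^ 2) (b ^ 2 * (u + v)) with h | h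
  · apply max_le
    · refine le_trans ?_ (le_max_right _ _)
      nlinarith [mul_le_mul_of_nonneg_right h hu,
        mul_nonneg (mul_nonneg (mul_nonneg hb hb) hv) (sub_nonneg.2 huv),
        mul_nonneg hb hv]
    · exact le_trans h2 (le_max_right _ _)
  · apply max_le
    · refine le_trans ?_ (le_max_left _ _)
      nlinarith [mul_nonneg (sub_nonneg.2 huv) (sub_nonneg.2 h)]
    · exact le_trans h2 (le_max_right _ _)

lemma FF_cont (a b : ℝ) : Continuous (FF a b) := by
  unfold FF
  fun_prop

lemma FF_zero (a b : ℝ) : FF a b 0 = 0 := by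
  simp [FF]

/-- For the planar system on the forward invariant quadrant, on which the
origin is the unique equilibrium, `V(x) = max{x₁/2, x₂ + x₂²/2}` is a global
Lyapunov function for the origin. -/
theorem example_max_separable :
    -- `XEx` is forward invariant
    (∀ x : ℝ → (Fin 2 → ℝ), (∀ t : ℝ, 0 ≤ t → HasDerivAt x (fEx (x t)) t) →
      x 0 ∈ XEx → ∀ t : ℝ, 0 ≤ t → x t ∈ XEx) ∧
    -- the origin is the unique equilibrium in `XEx`
    (∀ y ∈ XEx, fEx y = 0 → y = 0) ∧
    -- `V` is a global Lyapunov function for the origin on `XEx`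
    IsGlobalLyapunov fEx XEx 0 (fun z => max (z 0 / 2) (z 1 + (z 1) ^ 2 / 2)) := by
  have hVcont : Continuous (fun z : Fin 2 → ℝ => max (z 0 / 2) (z 1 + (z 1) ^ 2 / 2)) := by
    fun_prop
  refine ⟨?_, ?_, hVcont.continuousOn, ?_, ?_, ?_, ?_⟩
  · -- forward invariance
    intro x hx hx0 t ht
    obtain ⟨ha, hb⟩ := hx0
    obtain ⟨e1, e0⟩ := sol_eq hx t ht
    have hu : 0 < Real.exp (-t) := Real.exp_pos _
    have hu1 : Real.exp (-t) ≤ 1 := Real.exp_le_one_iff.2 (by linarith)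
    constructor
    · rw [e0]
      nlinarith [mul_nonneg hu.le ha,
        mul_nonneg (mul_nonneg hu.le (sq_nonneg (x 0 1))) (sub_nonneg.2 hu1)]
    · rw [e1]; positivity
  · -- unique equilibrium
    intro y hy hfy
    have h1 : -(y 1) = 0 := by simpa [fEx] using congrFun hfy 1
    have h0 : -(y 0) + (y 1) ^ 2 = 0 := by simpa [fEx] using congrFun hfy 0
    have hy1 : y 1 = 0 := by linarith
    have hy0 : y 0 = 0 := by nlinarith
    funext i
    fin_cases i <;> simp [hy0, hy1]
  · -- nonnegativity
    rintro z ⟨h0, h1⟩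
    exact le_trans (by positivity) (le_max_left _ _)
  · -- positive definiteness
    rintro z ⟨h0, h1⟩
    constructor
    · intro hV
      have hA : z 0 / 2 ≤ 0 := hV ▸ le_max_left _ _
      have hB : z 1 + (z 1) ^ 2 / 2 ≤ 0 := hV ▸ le_max_right _ _
      have hz0 : z 0 = 0 := by linarith
      have hz1 : z 1 = 0 := by nlinarith
      funext i
      fin_cases i <;> simp [hz0, hz1]
    · intro hz
      rw [hz]
      norm_num
  · -- compact sublevel sets
    intro L
    have hclosed : IsClosed {x ∈ XEx | max (x 0 / 2) (x 1 + (x 1) ^ 2 / 2) ≤ L} := by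
      have : {x ∈ XEx | max (x 0 / 2) (x 1 + (x 1) ^ 2 / 2) ≤ L} =
          ({x : Fin 2 → ℝ | 0 ≤ x 0} ∩ {x : Fin 2 → ℝ | 0 ≤ x 1}) ∩
            {x : Fin 2 → ℝ | max (x 0 / 2) (x 1 + (x 1) ^ 2 / 2) ≤ L} := by
        ext z; simp [XEx, and_assoc]
      rw [this]
      exact (((isClosed_le continuous_const (continuous_apply 0)).inter
        (isClosed_le continuous_const (continuous_apply 1))).inter
        (isClosed_le hVcont continuous_const))
    refine IsCompact.of_isClosed_subset
      (isCompact_Icc (a := (0 : Fin 2 → ℝ)) (b := fun _ => 2 * |L|)) hclosed ?_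
    rintro z ⟨⟨h0, h1⟩, hL⟩
    have hA : z 0 / 2 ≤ L := le_trans (le_max_left _ _) hL
    have hB : z 1 + (z 1) ^ 2 / 2 ≤ L := le_trans (le_max_right _ _) hL
    have habs : L ≤ |L| := le_abs_self L
    constructor
    · intro i
      fin_cases i
      · exact h0
      · exact h1
    · intro i
      fin_cases i <;> simp <;> nlinarith [sq_nonneg (z 1)]
  · -- solutions
    rintro x ⟨hmem, hderiv⟩
    obtain ⟨ha, hb⟩ := hmem 0 le_rfl
    have hVF : ∀ t : ℝ, 0 ≤ t →
        max (x t 0 / 2) (x t 1 + (x t 1) ^ 2 / 2) = FF (x 0 0) (x 0 1) (Real.exp (-t)) := by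
      intro t ht
      obtain ⟨e1, e0⟩ := sol_eq hderiv t ht
      rw [e1, e0]
      rfl
    constructor
    · intro s hs t ht hst
      simp only
      rw [hVF s hs, hVF t ht]
      exact FF_mono ha hb (Real.exp_pos _).le (Real.exp_le_exp.2 (by linarith))
    · have h1 : Tendsto (fun t => FF (x 0 0) (x 0 1) (Real.exp (-t))) atTop (nhds 0) := by
        have := ((FF_cont (x 0 0) (x 0 1)).tendsto 0).comp Real.tendsto_exp_neg_atTop_nhds_zero
        simpa [FF_zero, Function.comp_def] using this
      refine h1.congr' ?_
      filter_upwards [eventually_ge_atTop (0 : ℝ)] with t ht using (hVF t ht).symm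

end
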